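/- arXiv:2105.05317 — 2 statements merged into one kernel-verified Lean document; each statement's English description precedes it below -/
import Mathlib

section
/- For real y > 0 with y ≠ 1, real k > 1 and T > 0, the truncated Perron integral satisfies |(1/(2πi)) ∫_{k-iT}^{k+iT} (y^s / s) ds − h(y)| ≤ C · y^k / (T · |log y|) for an absolute constant C, where h(y) = 0 for 0 < y < 1 and h(y) = 1 for y > 1. -/
open Real Filter intervalIntegral

section PerronAux
open MeasureTheory Complex Set
open scoped FourierTransform Topology RealInnerProductSpace

lemma integrableOn_mul_cexp {c : ℂ} (hc : 0 < c.re) :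
    IntegrableOn (fun u : ℝ => (u : ℂ) * Complex.exp (-(c * u))) (Ioi 0) := by
  have hmaj : IntegrableOn (fun x : ℝ => x ^ (1:ℝ) * Real.exp (-c.re * x ^ (1:ℝ))) (Ioi 0) :=
    integrableOn_rpow_mul_exp_neg_mul_rpow (by norm_num) zero_lt_one hc
  refine (hmaj.mono' ?_ ?_)
  · exact (Complex.continuous_ofReal.mul
      (Complex.continuous_exp.comp (by fun_prop))).aestronglyMeasurable.restrict
  · filter_upwards [ae_restrict_mem measurableSet_Ioi] with u (hu : 0 < u)
    rw [norm_mul, Complex.norm_exp]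
    simp only [neg_re, Complex.mul_re, Complex.ofReal_re, Complex.ofReal_im, mul_zero,
      sub_zero, Real.rpow_one, Complex.norm_real, Real.norm_eq_abs, _root_.abs_of_pos hu, neg_mul, le_refl]

lemma integral_mul_cexp {c : ℂ} (hc : 0 < c.re) :
    ∫ u in Ioi (0:ℝ), (u : ℂ) * Complex.exp (-(c * u)) = 1 / c ^ 2 := by
  have hc0 : c ≠ 0 := fun h => by simp [h] at hc
  set F : ℝ → ℂ := fun u => -((u : ℂ) * c + 1) / c ^ 2 * Complex.exp (-(c * u)) with hF
  have hderiv : ∀ u : ℝ, HasDerivAt F ((u : ℂ) * Complex.exp (-(c * u))) u := by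
    intro u
    have h1 : HasDerivAt (fun z : ℂ => -(z * c + 1) / c ^ 2 * Complex.exp (-(c * z)))
        ((-c / c ^ 2) * Complex.exp (-(c * u)) +
          (-((u:ℂ) * c + 1) / c ^ 2) * (Complex.exp (-(c * u)) * -c)) (u : ℂ) := by
      have ha : HasDerivAt (fun z : ℂ => -(z * c + 1) / c ^ 2) (-c / c ^ 2) (u : ℂ) := by
        simpa using (((hasDerivAt_id (u:ℂ)).mul_const c).add_const 1).neg.div_const (c ^ 2)
      have hb : HasDerivAt (fun z : ℂ => Complex.exp (-(c * z)))
          (Complex.exp (-(c * u)) * -c) (u : ℂ) := by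
        have : HasDerivAt (fun z : ℂ => -(c * z)) (-c) (u : ℂ) := by
          simpa using ((hasDerivAt_id (u:ℂ)).const_mul c).fun_neg
        simpa using this.cexp
      exact ha.mul hb
    have h2 := h1.comp_ofReal
    convert h2 using 1
    field_simp
    ring
  have htendsto : Tendsto F atTop (𝓝 0) := by
    rw [tendsto_zero_iff_norm_tendsto_zero]
    have hmaj : ∀ᶠ u : ℝ in atTop, ‖F u‖ ≤
        (‖c‖ / ‖c‖^2) * (u * Real.exp (-c.re * u)) + (1/‖c‖^2) * Real.exp (-c.re * u) := by
      filter_upwards [eventually_ge_atTop (0:ℝ)] with u hu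
      rw [hF]
      simp only [norm_mul, norm_div, Complex.norm_exp]
      have h1 : ‖(-((u : ℂ) * c + 1))‖ ≤ u * ‖c‖ + 1 := by
        rw [norm_neg]
        refine (norm_add_le _ _).trans ?_
        simp [norm_mul, Complex.norm_real, Real.norm_eq_abs, _root_.abs_of_nonneg hu]
      have h2 : (-(c * u)).re = -c.re * u := by
        simp [Complex.mul_re]
      rw [h2]
      rw [show ‖c^2‖ = ‖c‖^2 by rw [norm_pow]]
      calc ‖(-((u:ℂ)*c+1))‖ / ‖c‖^2 * Real.exp (-c.re * u)
          ≤ (u * ‖c‖ + 1) / ‖c‖^2 * Real.exp (-c.re * u) := by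
            gcongr
        _ = (‖c‖ / ‖c‖^2) * (u * Real.exp (-c.re * u)) + (1/‖c‖^2) * Real.exp (-c.re * u) := by
            ring
    refine squeeze_zero' (by filter_upwards with u using norm_nonneg _) hmaj ?_
    have hA : Tendsto (fun u : ℝ => u * Real.exp (-c.re * u)) atTop (𝓝 0) := by
      have := Real.tendsto_pow_mul_exp_neg_atTop_nhds_zero 1
      have h2 : Tendsto (fun u : ℝ => c.re * u) atTop atTop :=
        Tendsto.const_mul_atTop hc tendsto_id
      have h3 := this.comp h2
      have : Tendsto (fun u : ℝ => (c.re * u) * Real.exp (-(c.re * u))) atTop (𝓝 0) := by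
        simpa [Function.comp_def] using h3
      have h4 := this.const_mul (c.re)⁻¹
      simp only [mul_zero] at h4
      convert h4 using 2 with u
      field_simp
    have hB : Tendsto (fun u : ℝ => Real.exp (-c.re * u)) atTop (𝓝 0) := by
      apply Real.tendsto_exp_atBot.comp
      exact Tendsto.const_mul_atTop_of_neg (neg_neg_iff_pos.mpr hc) tendsto_id
    simpa using ((hA.const_mul _).add (hB.const_mul _))
  have := integral_Ioi_of_hasDerivAt_of_tendsto
    (f := F) (f' := fun u : ℝ => (u : ℂ) * Complex.exp (-(c * u))) (a := 0) (m := 0)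
    (hderiv 0).continuousAt.continuousWithinAt
    (fun x _ => hderiv x) (integrableOn_mul_cexp hc) htendsto
  rw [this, hF]
  simp
  field_simp


noncomputable def pf (k : ℝ) : ℝ → ℂ :=
  fun u => ((max u 0 : ℝ) : ℂ) * Complex.exp (-(k * max u 0))

lemma pf_continuous (k : ℝ) : Continuous (pf k) := by
  unfold pf; fun_prop

lemma pf_of_nonpos {k u : ℝ} (hu : u ≤ 0) : pf k u = 0 := by
  unfold pf; rw [max_eq_right hu]; simp

lemma pf_of_nonneg {k u : ℝ} (hu : 0 ≤ u) :
    pf k u = (u : ℂ) * Complex.exp (-(k * u)) := by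
  unfold pf; rw [max_eq_left hu]

lemma pf_integrable {k : ℝ} (hk : 0 < k) : Integrable (pf k) := by
  have h1 : IntegrableOn (pf k) (Iic 0) := by
    apply (integrableOn_congr_fun (g := fun _ => (0:ℂ)) ?_ measurableSet_Iic).mpr
    · simp [integrableOn_const]
    · intro x hx; exact (pf_of_nonpos hx)
  have h2 : IntegrableOn (pf k) (Ioi 0) := by
    apply (integrableOn_congr_fun (fun x hx => pf_of_nonneg (le_of_lt hx)) measurableSet_Ioi).mpr
    exact integrableOn_mul_cexp (c := (k:ℂ)) (by simpa using hk)
  have h3 := h1.union h2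
  rw [Iic_union_Ioi] at h3
  exact integrableOn_univ.mp h3

lemma pf_fourier {k : ℝ} (hk : 0 < k) (w : ℝ) :
    𝓕 (pf k) w = 1 / ((k : ℂ) + 2 * π * w * Complex.I) ^ 2 := by
  have hre : (0:ℝ) < ((k : ℂ) + 2 * π * w * Complex.I).re := by simp [hk]
  rw [Real.fourier_eq']
  simp_rw [smul_eq_mul, RCLike.inner_apply, starRingEnd_apply, star_trivial]
  simp_rw [mul_comm w]
  have hinteg : Integrable
      (fun v : ℝ => Complex.exp (↑(-2 * π * (v * w)) * Complex.I) * pf k v) := by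
    refine Integrable.bdd_mul (c := 1) (pf_integrable hk) (Continuous.aestronglyMeasurable (by fun_prop)) ?_
    refine ae_of_all _ (fun v => ?_)
    rw [Complex.norm_exp_ofReal_mul_I]
  rw [← intervalIntegral.integral_Iic_add_Ioi (b := 0) hinteg.integrableOn hinteg.integrableOn]
  have hz : (∫ v in Iic (0:ℝ), Complex.exp (↑(-2 * π * (v * w)) * Complex.I) * pf k v) = 0 := by
    rw [setIntegral_congr_fun measurableSet_Iic (g := fun _ => (0:ℂ))
      (fun x hx => by rw [pf_of_nonpos hx, mul_zero])]
    simp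
  rw [hz, zero_add]
  rw [setIntegral_congr_fun measurableSet_Ioi
    (g := fun v : ℝ => (v : ℂ) * Complex.exp (-(((k : ℂ) + 2 * π * w * Complex.I) * v)))
    (fun v hv => ?_)]
  · exact integral_mul_cexp hre
  · rw [pf_of_nonneg (le_of_lt hv)]
    rw [mul_comm (Complex.exp _), mul_assoc, ← Complex.exp_add]
    congr 1
    push_cast
    ring_nf

lemma pf_fourier_integrable {k : ℝ} (hk : 1 ≤ k) : Integrable (𝓕 (pf k)) := by
  have hk0 : (0:ℝ) < k := lt_of_lt_of_le one_pos hk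
  have hmaj : Integrable (fun w : ℝ => (1 + w^2)⁻¹) := integrable_inv_one_add_sq
  refine hmaj.mono' ?_ ?_
  · have : Continuous fun w : ℝ => 1 / ((k : ℂ) + 2 * π * w * Complex.I) ^ 2 := by
      apply Continuous.div continuous_const (by fun_prop)
      intro w
      apply pow_ne_zero
      intro h
      have := congrArg Complex.re h
      simp at this
      linarith
    apply this.aestronglyMeasurable.congr
    filter_upwards with w using (pf_fourier hk0 w).symm
  · filter_upwards with w
    rw [pf_fourier hk0 w, norm_div, norm_one, norm_pow, Complex.sq_norm,
      Complex.normSq_apply]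
    have h1 : ((k : ℂ) + 2 * π * w * Complex.I).re = k := by simp
    have h2 : ((k : ℂ) + 2 * π * w * Complex.I).im = 2 * π * w := by simp
    rw [h1, h2]
    rw [one_div]
    rw [inv_le_inv₀ (by nlinarith [sq_nonneg w, sq_nonneg (2*π*w), pow_pos hk0 2]) (by nlinarith [sq_nonneg w, sq_nonneg (2*π*w), pow_pos hk0 2])]
    have hpi : (1:ℝ) ≤ (2*π)^2 := by nlinarith [Real.pi_gt_three]
    have : w^2 ≤ (2*π)^2 * w^2 := by nlinarith [sq_nonneg w]
    nlinarith [sq_nonneg w, hk0]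

lemma J_eq {k : ℝ} (hk : 1 ≤ k) (l : ℝ) :
    ∫ t : ℝ, Complex.exp (↑(t * l) * Complex.I) / ((k:ℂ) + t * Complex.I) ^ 2
      = ((2 * π : ℝ) : ℂ) * pf k l := by
  have hk0 : (0:ℝ) < k := lt_of_lt_of_le one_pos hk
  have hinv : 𝓕⁻ (𝓕 (pf k)) l = pf k l :=
    (pf_integrable hk0).fourierInv_fourier_eq (pf_fourier_integrable hk)
      (pf_continuous k).continuousAt
  rw [Real.fourierInv_eq'] at hinv
  set g : ℝ → ℂ := fun t => Complex.exp (↑(t * l) * Complex.I) / ((k:ℂ) + t * Complex.I) ^ 2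
    with hg
  have hsub := MeasureTheory.Measure.integral_comp_mul_left g (2*π)
  have hident : (∫ x : ℝ, g (2 * π * x)) = pf k l := by
    rw [← hinv]
    congr 1
    funext w
    rw [hg]
    simp only [smul_eq_mul, RCLike.inner_apply, starRingEnd_apply, star_trivial]
    rw [pf_fourier hk0 w]
    rw [div_eq_mul_one_div]
    congr 3
    · push_cast; ring
    · push_cast; ring
  rw [hident] at hsub
  have habs : |(2*π)⁻¹| = (2*π)⁻¹ := abs_of_pos (by positivity)
  rw [habs] at hsub
  have := congrArg (fun z : ℂ => ((2*π : ℝ)) • z) hsub.symm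
  simp only [smul_smul, mul_inv_cancel₀ (by positivity : (2*π:ℝ) ≠ 0), one_smul] at this
  rw [this, real_smul]

lemma hz_ne {k : ℝ} (hk : 0 < k) (t : ℝ) : ((k:ℂ) + t * Complex.I) ≠ 0 := by
  intro h
  have := congrArg Complex.re h
  simp at this
  linarith

noncomputable def Fb (k l : ℝ) : ℝ → ℂ :=
  fun t => Complex.exp (↑(t * l) * Complex.I) /
    ((Complex.I * (l:ℂ)) * ((k:ℂ) + t * Complex.I))

lemma Fb_hasDeriv {k l : ℝ} (hk : 0 < k) (hl : l ≠ 0) (t : ℝ) :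
    HasDerivAt (Fb k l)
      (Complex.exp (↑(t * l) * Complex.I) / ((k:ℂ) + t * Complex.I)
        - (1/(l:ℂ)) * (Complex.exp (↑(t * l) * Complex.I) / ((k:ℂ) + t * Complex.I) ^ 2)) t := by
  have hzt := hz_ne hk t
  have hlC : (l : ℂ) ≠ 0 := by exact_mod_cast hl
  have he : HasDerivAt (fun z : ℂ => Complex.exp (z * ((l:ℂ) * Complex.I)))
      (Complex.exp ((t:ℂ) * ((l:ℂ) * Complex.I)) * ((l:ℂ) * Complex.I)) (t:ℂ) := by
    simpa using ((hasDerivAt_id ((t:ℂ))).mul_const ((l:ℂ) * Complex.I)).cexp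
  have hinv : HasDerivAt (fun z : ℂ => ((k:ℂ) + z * Complex.I)⁻¹)
      (-Complex.I / ((k:ℂ) + (t:ℂ) * Complex.I) ^ 2) (t:ℂ) := by
    have hd : HasDerivAt (fun z : ℂ => (k:ℂ) + z * Complex.I) Complex.I (t:ℂ) := by
      simpa using (((hasDerivAt_id ((t:ℂ))).mul_const Complex.I).const_add (k:ℂ))
    exact hd.inv hzt
  have hprod := (he.mul (hinv.const_mul ((Complex.I * (l:ℂ))⁻¹))).comp_ofReal
  have hFb : Fb k l = fun s : ℝ =>
      Complex.exp ((s:ℂ) * ((l:ℂ) * Complex.I)) *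
        ((Complex.I * (l:ℂ))⁻¹ * ((k:ℂ) + (s:ℂ) * Complex.I)⁻¹) := by
    funext s
    rw [Fb, div_eq_mul_inv, mul_inv]
    congr 2
    push_cast; ring
  rw [hFb]
  convert hprod using 1
  · rfl
  have hexp : Complex.exp (↑(t * l) * Complex.I)
      = Complex.exp ((t:ℂ) * ((l:ℂ) * Complex.I)) := by congr 1; push_cast; ring
  rw [hexp]
  field_simp
  ring

lemma cont1 {k : ℝ} (hk : 0 < k) (l : ℝ) :
    Continuous fun t : ℝ => Complex.exp (↑(t * l) * Complex.I) / ((k:ℂ) + t * Complex.I) :=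
  Continuous.div (by fun_prop) (by fun_prop) (fun t => hz_ne hk t)

lemma cont2 {k : ℝ} (hk : 0 < k) (l : ℝ) :
    Continuous fun t : ℝ => Complex.exp (↑(t * l) * Complex.I) / ((k:ℂ) + t * Complex.I) ^ 2 :=
  Continuous.div (by fun_prop) (by fun_prop) (fun t => pow_ne_zero 2 (hz_ne hk t))

lemma ibp {k l : ℝ} (hk : 0 < k) (hl : l ≠ 0) (T : ℝ) :
    (∫ t in (-T)..T, Complex.exp (↑(t * l) * Complex.I) / ((k:ℂ) + t * Complex.I))
      = Fb k l T - Fb k l (-T)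
        + (1/(l:ℂ)) * ∫ t in (-T)..T,
            Complex.exp (↑(t * l) * Complex.I) / ((k:ℂ) + t * Complex.I) ^ 2 := by
  have h := intervalIntegral.integral_eq_sub_of_hasDerivAt
    (f := Fb k l) (a := -T) (b := T) (fun t _ => Fb_hasDeriv hk hl t)
    (((cont1 hk l).sub (continuous_const.mul (cont2 hk l))).intervalIntegrable _ _)
  rw [intervalIntegral.integral_sub ((cont1 hk l).intervalIntegrable _ _)
    (((cont2 hk l).intervalIntegrable (-T) T).const_mul (1/(l:ℂ))),
    intervalIntegral.integral_const_mul] at h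
  linear_combination h

lemma g2_norm {k : ℝ} (hk : 0 < k) (l t : ℝ) :
    ‖Complex.exp (↑(t * l) * Complex.I) / ((k:ℂ) + t * Complex.I) ^ 2‖ = (k^2 + t^2)⁻¹ := by
  rw [norm_div, Complex.norm_exp_ofReal_mul_I, norm_pow,
    Complex.sq_norm, Complex.normSq_apply]
  have h1 : ((k : ℂ) + t * Complex.I).re = k := by simp
  have h2 : ((k : ℂ) + t * Complex.I).im = t := by simp
  rw [h1, h2, one_div]
  ring_nf

lemma hreal_integrable {k : ℝ} (hk : 1 ≤ k) :
    Integrable (fun t : ℝ => (k^2 + t^2)⁻¹) := by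
  have hk0 : (0:ℝ) < k := lt_of_lt_of_le one_pos hk
  refine integrable_inv_one_add_sq.mono' ?_ ?_
  · exact (Continuous.aestronglyMeasurable (by
      exact Continuous.inv₀ (by fun_prop) (fun t => by positivity)))
  · filter_upwards with t
    rw [Real.norm_eq_abs, abs_of_pos (by positivity)]
    gcongr
    nlinarith

lemma g2_integrable {k : ℝ} (hk : 1 ≤ k) (l : ℝ) :
    Integrable (fun t : ℝ =>
      Complex.exp (↑(t * l) * Complex.I) / ((k:ℂ) + t * Complex.I) ^ 2) := by
  have hk0 : (0:ℝ) < k := lt_of_lt_of_le one_pos hk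
  refine (hreal_integrable hk).mono' (cont2 hk0 l).aestronglyMeasurable ?_
  filter_upwards with t
  rw [g2_norm hk0 l t]

lemma tail_bound {k : ℝ} (hk : 1 ≤ k) (l : ℝ) {T : ℝ} (hT : 0 < T) :
    ‖(∫ t : ℝ, Complex.exp (↑(t * l) * Complex.I) / ((k:ℂ) + t * Complex.I) ^ 2)
      - ∫ t in (-T)..T, Complex.exp (↑(t * l) * Complex.I) / ((k:ℂ) + t * Complex.I) ^ 2‖
      ≤ 2 / T := by
  have hk0 : (0:ℝ) < k := lt_of_lt_of_le one_pos hk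
  set g : ℝ → ℂ := fun t =>
    Complex.exp (↑(t * l) * Complex.I) / ((k:ℂ) + t * Complex.I) ^ 2 with hgdef
  have hTT : (-T : ℝ) ≤ T := by linarith
  rw [intervalIntegral.integral_of_le hTT]
  have hsplit := MeasureTheory.integral_add_compl (measurableSet_Ioc (a := -T) (b := T))
    (g2_integrable hk l)
  have hdiff : (∫ t : ℝ, g t) - ∫ t in Ioc (-T) T, g t = ∫ t in (Ioc (-T) T)ᶜ, g t := by
    rw [← hsplit]; ring
  rw [hdiff]
  refine le_trans (MeasureTheory.norm_integral_le_integral_norm _) ?_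
  have hnormint : ∫ t in (Ioc (-T) T)ᶜ, ‖g t‖ = ∫ t in (Ioc (-T) T)ᶜ, (k^2+t^2)⁻¹ := by
    refine setIntegral_congr_fun (measurableSet_Ioc.compl) (fun t _ => g2_norm hk0 l t)
  have hcompl : (Ioc (-T) T)ᶜ = Iic (-T) ∪ Ioi T := by
    ext x
    simp only [Set.mem_compl_iff, Set.mem_Ioc, not_and_or, not_lt, not_le, Set.mem_union,
      Set.mem_Iic, Set.mem_Ioi]
  rw [hnormint, hcompl,
    MeasureTheory.setIntegral_union (by simpa using Set.Iic_disjoint_Ioi hTT) measurableSet_Ioi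
      ((hreal_integrable hk).integrableOn) ((hreal_integrable hk).integrableOn)]
  have hIic : ∫ t in Iic (-T), (k^2+t^2)⁻¹ = ∫ t in Ioi T, (k^2+t^2)⁻¹ := by
    have := integral_comp_neg_Iic (-T) (fun t : ℝ => (k^2+t^2)⁻¹)
    simp only [neg_sq, neg_neg] at this
    rw [this]
  have hIoi : ∫ t in Ioi T, (k^2+t^2)⁻¹ ≤ 1 / T := by
    have hle : ∫ t in Ioi T, (k^2+t^2)⁻¹ ≤ ∫ t in Ioi T, t ^ (-2 : ℝ) := by
      refine setIntegral_mono_on ((hreal_integrable hk).integrableOn)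
        (integrableOn_Ioi_rpow_of_lt (by norm_num) hT) measurableSet_Ioi (fun t ht => ?_)
      have ht0 : (0:ℝ) < t := hT.trans ht
      rw [Real.rpow_neg ht0.le, show ((2:ℝ)) = ((2:ℕ):ℝ) by norm_num, Real.rpow_natCast]
      rw [inv_le_inv₀ (by positivity) (by positivity)]
      nlinarith
    rw [integral_Ioi_rpow_of_lt (by norm_num) hT] at hle
    refine hle.trans ?_
    rw [show (-2:ℝ) + 1 = -1 by norm_num, Real.rpow_neg_one]
    rw [le_div_iff₀ hT]
    field_simp
    exact le_rfl
  rw [hIic]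
  calc (∫ t in Ioi T, (k^2+t^2)⁻¹) + ∫ t in Ioi T, (k^2+t^2)⁻¹
      ≤ 1/T + 1/T := by gcongr
    _ = 2 / T := by ring

lemma Fb_norm_le {k l : ℝ} (hk : 0 < k) (hl : l ≠ 0) {t T : ℝ} (hT : 0 < T) (ht : |t| = T) :
    ‖Fb k l t‖ ≤ 1 / (|l| * T) := by
  have habs : T ≤ ‖(k:ℂ) + t * Complex.I‖ := by
    have h1 := Complex.abs_im_le_norm ((k:ℂ) + t * Complex.I)
    have h2 : ((k:ℂ) + t * Complex.I).im = t := by simp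
    rw [h2, ht] at h1
    exact h1
  have hne : (0:ℝ) < |l| := abs_pos.mpr hl
  rw [Fb, norm_div, Complex.norm_exp_ofReal_mul_I, norm_mul, norm_mul,
    Complex.norm_I, one_mul, Complex.norm_real, Real.norm_eq_abs]
  gcongr

lemma main_est {k l : ℝ} (hk : 1 ≤ k) (hl : l ≠ 0) {T : ℝ} (hT : 0 < T) :
    ‖(∫ t in (-T)..T, Complex.exp (↑(t * l) * Complex.I) / ((k:ℂ) + t * Complex.I))
      - ((2 * π : ℝ):ℂ) / (l:ℂ) * pf k l‖ ≤ 4 / (|l| * T) := by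
  have hk0 : (0:ℝ) < k := lt_of_lt_of_le one_pos hk
  have hlC : (l : ℂ) ≠ 0 := by exact_mod_cast hl
  have hibp := ibp hk0 hl T
  have hJ := J_eq hk l
  have hne : (0:ℝ) < |l| := abs_pos.mpr hl
  set v : ℂ := (1/(l:ℂ)) *
      ((∫ t in (-T)..T, Complex.exp (↑(t * l) * Complex.I) / ((k:ℂ) + t * Complex.I) ^ 2)
        - ∫ t : ℝ, Complex.exp (↑(t * l) * Complex.I) / ((k:ℂ) + t * Complex.I) ^ 2) with hv
  have hE : (∫ t in (-T)..T, Complex.exp (↑(t * l) * Complex.I) / ((k:ℂ) + t * Complex.I))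
      - ((2 * π : ℝ):ℂ) / (l:ℂ) * pf k l
      = (Fb k l T - Fb k l (-T)) + v := by
    rw [hibp, hv, hJ]
    generalize (∫ t in (-T)..T, Complex.exp (↑(t * l) * Complex.I) / ((k:ℂ) + t * Complex.I) ^ 2) = X
    field_simp
    ring
  rw [hE]
  have h1 := Fb_norm_le hk0 hl hT (abs_of_pos hT)
  have h2 := Fb_norm_le (l := l) hk0 hl hT (by rw [abs_neg, abs_of_pos hT])
  have h3 : ‖v‖ ≤ (1 / |l|) * (2 / T) := by
    rw [hv, norm_mul, norm_div, norm_one, Complex.norm_real, Real.norm_eq_abs]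
    gcongr
    rw [norm_sub_rev]
    exact tail_bound hk l hT
  have h12 : ‖Fb k l T - Fb k l (-T)‖ ≤ 1 / (|l| * T) + 1 / (|l| * T) :=
    (norm_sub_le _ _).trans (add_le_add h1 h2)
  refine (norm_add_le _ _).trans ((add_le_add h12 h3).trans (le_of_eq ?_))
  field_simp
  ring


end PerronAux

noncomputable def hFun (y : ℝ) : ℂ := if y < 1 then 0 else 1


theorem stmt4 : ∃ C : ℝ, ∀ y k T : ℝ, 0 < y → y ≠ 1 → 1 < k → 0 < T →
    ‖(1 / (2 * Real.pi * Complex.I)) *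
        (∫ t in (-T)..T,
          (y : ℂ) ^ ((k : ℂ) + t * Complex.I) / ((k : ℂ) + t * Complex.I) * Complex.I) -
      hFun y‖ ≤ C * y ^ k / (T * |Real.log y|) := by
  refine ⟨2, fun y k T hy hy1 hk hT => ?_⟩
  have hk0 : (0:ℝ) < k := by linarith
  have hk1 : (1:ℝ) ≤ k := hk.le
  set l := Real.log y with hldef
  have hl : l ≠ 0 := by
    intro h
    rcases Real.log_eq_zero.mp h with h|h|h
    · linarith
    · exact hy1 h
    · linarith
  have hlC : (l:ℂ) ≠ 0 := by exact_mod_cast hl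
  have hyk_pos : (0:ℝ) < y ^ k := Real.rpow_pos_of_pos hy k
  have hpi : (0:ℝ) < π := Real.pi_pos
  have hπC : ((π:ℝ):ℂ) ≠ 0 := by exact_mod_cast hpi.ne'
  have hne : (0:ℝ) < |l| := abs_pos.mpr hl
  set A : ℂ := ∫ t in (-T)..T,
    Complex.exp (↑(t * l) * Complex.I) / ((k:ℂ) + t * Complex.I) with hAdef
  have hIeq : (∫ t in (-T)..T,
        (y : ℂ) ^ ((k : ℂ) + t * Complex.I) / ((k : ℂ) + t * Complex.I) * Complex.I)
      = ((y^k:ℝ):ℂ) * Complex.I * A := by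
    rw [hAdef, ← intervalIntegral.integral_const_mul]
    refine intervalIntegral.integral_congr (fun t _ => ?_)
    have hy0 : (y:ℂ) ≠ 0 := by exact_mod_cast hy.ne'
    rw [Complex.cpow_def_of_ne_zero hy0, ← Complex.ofReal_log hy.le]
    have hsplit : ((l:ℂ)) * ((k:ℂ) + t * Complex.I) = ↑(k * l) + ↑(t * l) * Complex.I := by
      push_cast; ring
    rw [hsplit, Complex.exp_add]
    have h2 : Complex.exp ((k*l : ℝ):ℂ) = ((y^k:ℝ):ℂ) := by
      rw [← Complex.ofReal_exp]
      norm_cast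
      rw [Real.rpow_def_of_pos hy]
      ring_nf
      rw [hldef]
    rw [h2]
    ring
  rw [hIeq]
  have hval : ((y^k:ℝ) : ℂ) * Complex.exp (-((k:ℂ) * (l:ℂ))) = 1 := by
    rw [show (-((k:ℂ) * (l:ℂ))) = ((-(k*l) : ℝ) : ℂ) by push_cast; ring,
      ← Complex.ofReal_exp, ← Complex.ofReal_mul]
    norm_cast
    rw [Real.rpow_def_of_pos hy, ← Real.exp_add, ← hldef]
    rw [show Real.log y * k + -(k*l) = 0 by rw [← hldef]; ring, Real.exp_zero]
  have hfun_eq : hFun y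
      = ((y^k:ℝ):ℂ) / (2 * (π:ℂ)) * ((((2*π:ℝ)):ℂ) / (l:ℂ) * pf k l) := by
    by_cases hylt : y < 1
    · have hlneg : l < 0 := Real.log_neg hy hylt
      rw [hFun, if_pos hylt, pf_of_nonpos hlneg.le]
      simp
    · have hygt : 1 < y := lt_of_le_of_ne (not_lt.mp hylt) (Ne.symm hy1)
      have hlpos : 0 < l := Real.log_pos hygt
      rw [hFun, if_neg hylt, pf_of_nonneg hlpos.le]
      have h2π : ((2*π:ℝ):ℂ) ≠ 0 := by
        exact_mod_cast (by positivity : (2*π:ℝ) ≠ 0)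
      field_simp
      push_cast
      rw [mul_comm (l:ℂ) (k:ℂ)]
      linear_combination (-2*(π:ℂ)) * hval
  have hX : (1 / (2 * (π:ℂ) * Complex.I)) * (((y^k:ℝ):ℂ) * Complex.I * A) - hFun y
      = ((y^k:ℝ):ℂ) / (2 * (π:ℂ)) * (A - (((2*π:ℝ):ℂ) / (l:ℂ) * pf k l)) := by
    rw [hfun_eq]
    field_simp [Complex.I_ne_zero]
  rw [hX]
  have hnormc : ‖((y^k:ℝ):ℂ) / (2 * (π:ℂ))‖ = y^k / (2*π) := by
    rw [norm_div, Complex.norm_real, Real.norm_eq_abs, abs_of_pos hyk_pos]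
    congr 1
    rw [show (2 * (π:ℂ)) = ((2*π:ℝ):ℂ) by push_cast; ring, Complex.norm_real,
      Real.norm_eq_abs, abs_of_pos (by positivity)]
  calc ‖((y^k:ℝ):ℂ) / (2 * (π:ℂ)) * (A - (((2*π:ℝ):ℂ) / (l:ℂ) * pf k l))‖
      = (y^k / (2*π)) * ‖A - (((2*π:ℝ):ℂ) / (l:ℂ) * pf k l)‖ := by
        rw [norm_mul, hnormc]
    _ ≤ (y^k / (2*π)) * (4 / (|l| * T)) := by
        gcongr
        exact main_est hk1 hl hT
    _ = (2/π) * (y^k / (T * |l|)) := by field_simp; ring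
    _ ≤ 2 * (y^k / (T * |l|)) := by
        have h2π : (2/π : ℝ) ≤ 2 := by
          rw [div_le_iff₀ hpi]
          nlinarith [Real.pi_gt_three]
        exact mul_le_mul_of_nonneg_right h2π (by positivity)
    _ = 2 * y^k / (T * |l|) := by ring
end

section
/- There is an absolute constant C such that for all real x > 2 and T > 0, with k = 1 + 1/log x and N the nearest integer to x, Σ_{n=1}^∞ x^k / (T · n^k · |log(x/n)|) ≤ C·( x·log x / T + x/(T·|x − N|) ), where the sum omits the term n = x if x is an integer. -/
open Real

-- log t ≥ 1 - 1/t for t > 0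
lemma my_log_lb {t : ℝ} (ht : 0 < t) : 1 - 1/t ≤ Real.log t := by
  have h := Real.log_le_sub_one_of_pos (x := 1/t) (by positivity)
  rw [Real.log_div one_ne_zero (ne_of_gt ht), Real.log_one] at h
  linarith

-- |log(x/n)| ≥ |x-n|/(2x) when 0 < n < 2x
lemma my_abs_log_ge {x n : ℝ} (hx : 0 < x) (hn : 0 < n) (hn2 : n < 2*x) :
    |x - n| / (2*x) ≤ |Real.log (x/n)| := by
  rcases le_total n x with h | h
  · have h1 : 1 - n/x ≤ Real.log (x/n) := by
      have := my_log_lb (t := x/n) (by positivity)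
      rw [one_div_div] at this; linarith
    have h0 : 0 ≤ Real.log (x/n) := Real.log_nonneg (by rw [le_div_iff₀ hn]; linarith)
    rw [abs_of_nonneg h0, abs_of_nonneg (by linarith)]
    rw [div_le_iff₀ (by positivity)]
    have : (1 - n/x) * x = x - n := by field_simp
    nlinarith [h1, hx]
  · have h1 : Real.log (x/n) ≤ x/n - 1 := Real.log_le_sub_one_of_pos (by positivity)
    have h0 : Real.log (x/n) ≤ 0 := Real.log_nonpos (by positivity) (by rw [div_le_one hn]; linarith)
    rw [abs_of_nonpos h0, abs_of_nonpos (by linarith)]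
    rw [div_le_iff₀ (by positivity)]
    have h2 : 1 - x/n ≤ -Real.log (x/n) := by linarith
    have h3 : (1 - x/n) * n = n - x := by field_simp
    nlinarith [h2, hn, hn2]

-- |log(x/n)| ≥ log 2 outside middle region
lemma my_abs_log_ge_log2 {x n : ℝ} (hx : 0 < x) (hn : 0 < n)
    (h : n ≤ x/2 ∨ 2*x ≤ n) : Real.log 2 ≤ |Real.log (x/n)| := by
  rcases h with h | h
  · have h2 : (2:ℝ) ≤ x/n := by rw [le_div_iff₀ hn]; linarith
    have := Real.log_le_log (by norm_num) h2
    exact le_trans this (le_abs_self _)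
  · have h2 : x/n ≤ 1/2 := by rw [div_le_div_iff₀ hn (by norm_num)]; linarith
    have hl : Real.log (x/n) ≤ Real.log (1/2) := Real.log_le_log (by positivity) h2
    rw [Real.log_div one_ne_zero (by norm_num), Real.log_one] at hl
    have := neg_le_abs (Real.log (x/n))
    linarith

lemma my_tele {u m : ℝ} (hu : 0 < u) (hm : 1 ≤ m) :
    (m+1) ^ (-(1+u)) * u ≤ m ^ (-u) - (m+1) ^ (-u) := by
  have hm0 : 0 < m := by linarith
  have hm1 : 0 < m + 1 := by linarith
  have h1 : 1/(m+1) ≤ Real.log ((m+1)/m) := by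
    have h := Real.log_le_sub_one_of_pos (x := m/(m+1)) (by positivity)
    have heq : Real.log ((m+1)/m) = -Real.log (m/(m+1)) := by
      rw [← Real.log_inv]; congr 1; field_simp
    have : m/(m+1) - 1 = -(1/(m+1)) := by field_simp; ring
    rw [this] at h; rw [heq]; linarith
  have h2 : 1 + u/(m+1) ≤ ((m+1)/m) ^ u := by
    rw [Real.rpow_def_of_pos (by positivity)]
    have := Real.add_one_le_exp (Real.log ((m+1)/m) * u)
    have h3 : u/(m+1) ≤ Real.log ((m+1)/m) * u := by
      rw [div_eq_mul_inv, mul_comm]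
      exact mul_le_mul_of_nonneg_right ((by rwa [one_div] at h1)) hu.le
    linarith
  have h3 : (m+1) ^ (-u) * ((m+1)/m) ^ u = m ^ (-u) := by
    rw [Real.div_rpow (by linarith) hm0.le, Real.rpow_neg hm1.le, Real.rpow_neg hm0.le]
    field_simp
  have h4 : (m+1) ^ (-(1+u)) = (m+1)⁻¹ * (m+1) ^ (-u) := by
    rw [show -(1+u) = -1 + -u by ring, Real.rpow_add hm1, Real.rpow_neg_one]
  have h5 : (0:ℝ) < (m+1) ^ (-u) := Real.rpow_pos_of_pos hm1 _
  calc (m+1) ^ (-(1+u)) * u = (m+1) ^ (-u) * (u/(m+1)) := by rw [h4]; ring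
    _ ≤ (m+1) ^ (-u) * (((m+1)/m) ^ u - 1) := by
        apply mul_le_mul_of_nonneg_left (by linarith) h5.le
    _ = m ^ (-u) - (m+1) ^ (-u) := by rw [mul_sub, h3, mul_one]

lemma my_zeta_bound {L : ℝ} (hL : 0 < L) :
    ∑' n : ℕ, ((n:ℝ)+1) ^ (-(1+1/L)) ≤ 1 + L := by
  set u := 1/L with hu_def
  have hu : 0 < u := by positivity
  apply Real.tsum_le_of_sum_range_le (fun n => by positivity)
  intro M
  rcases M with _ | M'
  · simp; linarith
  rw [Finset.sum_range_succ']
  have h0 : ((0:ℕ):ℝ) + 1 = 1 := by norm_num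
  have hterm0 : (((0:ℕ):ℝ)+1) ^ (-(1+u)) = 1 := by rw [h0, Real.one_rpow]
  rw [hterm0]
  have key : ∀ i ∈ Finset.range M', ((((i:ℕ)+1:ℕ)):ℝ) + 1 ≤ 0 ∨ True := fun _ _ => Or.inr trivial
  have hsum : ∑ i ∈ Finset.range M', (((i+1:ℕ)):ℝ) + 1 ≤ 0 ∨ True := Or.inr trivial
  have hbd : ∑ i ∈ Finset.range M', ((((i+1:ℕ)):ℝ) + 1) ^ (-(1+u))
      ≤ ∑ i ∈ Finset.range M', (L * ((i:ℝ)+1) ^ (-u) - L * (((i:ℝ)+1)+1) ^ (-u)) := by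
    apply Finset.sum_le_sum
    intro i _
    have hm : (1:ℝ) ≤ (i:ℝ) + 1 := le_add_of_nonneg_left (Nat.cast_nonneg i)
    have h := my_tele hu hm
    have hLu : L * u = 1 := by rw [hu_def]; field_simp
    push_cast
    nlinarith [h, Real.rpow_pos_of_pos (show (0:ℝ) < (i:ℝ)+1+1 by positivity) (-(1+u)), hL]
  have htel : ∑ i ∈ Finset.range M', (L * ((i:ℝ)+1) ^ (-u) - L * (((i:ℝ)+1)+1) ^ (-u))
      = L * ((0:ℝ)+1) ^ (-u) - L * ((M':ℝ)+1) ^ (-u) := by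
    have := Finset.sum_range_sub' (f := fun i => L * ((i:ℝ)+1) ^ (-u)) M'
    simpa using this
  have hle : L * ((0:ℝ)+1) ^ (-u) - L * ((M':ℝ)+1) ^ (-u) ≤ L := by
    have h1 : ((0:ℝ)+1) ^ (-u) = 1 := by norm_num
    have h2 : (0:ℝ) ≤ L * ((M':ℝ)+1) ^ (-u) := by positivity
    rw [h1]; linarith
  linarith [hbd, htel ▸ hbd, hle]

set_option maxHeartbeats 2000000 in
theorem stmt6 : ∃ C : ℝ, ∀ x T : ℝ, 2 < x → (¬ ∃ m : ℤ, x = m) → 0 < T →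
    ∑' n : ℕ+,
        x ^ (1 + 1 / Real.log x) /
          (T * (n : ℝ) ^ (1 + 1 / Real.log x) * |Real.log (x / (n : ℝ))|)
      ≤ C * (x * Real.log x / T + x / (T * |x - (round x : ℝ)|)) := by
  use 10000
  intro x T hx hni hT
  have hx0 : (0:ℝ) < x := by linarith
  set L := Real.log x with hLdef
  have hL : 0 < L := Real.log_pos (by linarith)
  have hL2 : Real.log 2 < L := Real.log_lt_log (by norm_num) hx
  have hlog2 : (0.6931471803:ℝ) < Real.log 2 := Real.log_two_gt_d9
  have he3 : Real.exp 1 < 3 := lt_trans Real.exp_one_lt_d9 (by norm_num)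
  have he0 : (0:ℝ) < Real.exp 1 := Real.exp_pos 1
  set k : ℝ := 1 + 1/L with hkdef
  have hk1 : 1 ≤ k := by rw [hkdef]; nlinarith [one_div_pos.2 hL]
  have hxk : x ^ k = Real.exp 1 * x := by
    rw [hkdef, Real.rpow_add hx0, Real.rpow_one, Real.rpow_def_of_pos hx0, ← hLdef,
      mul_one_div, div_self (ne_of_gt hL)]
    ring
  set N : ℤ := round x with hNdef
  have hxint : ∀ m : ℤ, x ≠ (m:ℝ) := fun m h => hni ⟨m, h⟩
  have hxNhalf : |x - (N:ℝ)| ≤ 1/2 := abs_sub_round x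
  have hN2 : (2:ℤ) ≤ N := by
    have h1 : x - (N:ℝ) ≤ 1/2 := (abs_le.1 hxNhalf).2
    have h2 : (1:ℝ) < (N:ℝ) := by linarith
    have h3 : (1:ℤ) < N := by exact_mod_cast h2
    omega
  have hxNpos : 0 < |x - (N:ℝ)| := abs_pos.2 (sub_ne_zero.2 (hxint N))
  set c4 : ℝ := 4 * Real.exp 1 * x / T with hc4
  set A : ℝ := Real.exp 1 * x / (T * Real.log 2) with hA
  have hA0 : 0 ≤ A := by
    rw [hA]; apply div_nonneg (by positivity)
    exact mul_nonneg hT.le (by linarith)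
  have hc40 : 0 ≤ c4 := by
    rw [hc4]; apply div_nonneg (by positivity) hT.le
  set M₀ : ℕ := ⌈2*x⌉₊ with hM0
  have hM0x : 2*x ≤ (M₀:ℝ) := Nat.le_ceil _
  set g1 : ℕ → ℝ := fun m => A * ((m:ℝ)+1) ^ (-k) with hg1
  set g2 : ℕ → ℝ := fun m =>
    if x/2 < (m:ℝ)+1 ∧ (m:ℝ)+1 < 2*x then c4 * |x - ((m:ℝ)+1)|⁻¹ else 0 with hg2
  set f : ℕ → ℝ := fun m =>
    Real.exp 1 * x / (T * ((m:ℝ)+1) ^ k * |Real.log (x/((m:ℝ)+1))|) with hf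
  -- reindex
  have hLHS : (∑' n : ℕ+, x ^ k / (T * (n:ℝ) ^ k * |Real.log (x/(n:ℝ))|)) = ∑' m:ℕ, f m := by
    rw [← Equiv.tsum_eq (Equiv.pnatEquivNat.symm)]
    apply tsum_congr; intro m
    rw [hf, hxk]
    norm_num [Equiv.pnatEquivNat, Nat.succPNat]
  rw [hLHS]
  -- nonnegativity of f
  have hf0 : ∀ m, 0 ≤ f m := by
    intro m
    apply div_nonneg (mul_nonneg he0.le hx0.le)
    exact mul_nonneg (mul_nonneg hT.le (Real.rpow_nonneg (by positivity) _)) (abs_nonneg _)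
  -- pointwise bound
  have hfg : ∀ m : ℕ, f m ≤ g1 m + g2 m := by
    intro m
    have hnm0 : (0:ℝ) < (m:ℝ)+1 := by positivity
    have hnm1 : (1:ℝ) ≤ (m:ℝ)+1 := by
      have := Nat.cast_nonneg (α := ℝ) m; linarith
    have hg10 : 0 ≤ g1 m := by
      simp only [hg1]
      exact mul_nonneg hA0 (Real.rpow_nonneg hnm0.le _)
    have hpk : (m:ℝ)+1 ≤ ((m:ℝ)+1) ^ k := by
      nth_rewrite 1 [← Real.rpow_one ((m:ℝ)+1)]
      exact Real.rpow_le_rpow_of_exponent_le hnm1 hk1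
    have hkpos : (0:ℝ) < ((m:ℝ)+1) ^ k := Real.rpow_pos_of_pos hnm0 _
    by_cases hreg : x/2 < (m:ℝ)+1 ∧ (m:ℝ)+1 < 2*x
    · -- middle region
      have hne : x ≠ (m:ℝ)+1 := by
        have := hxint ((m:ℤ)+1)
        intro h; apply this; rw [h]; push_cast; ring
      have habs : 0 < |x - ((m:ℝ)+1)| := abs_pos.2 (sub_ne_zero.2 hne)
      have hlog := my_abs_log_ge hx0 hnm0 hreg.2
      have hden : T * (|x - ((m:ℝ)+1)| / 4) ≤ T * ((m:ℝ)+1) ^ k * |Real.log (x/((m:ℝ)+1))| := by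
        have h1 : x/2 ≤ ((m:ℝ)+1) ^ k := le_trans hreg.1.le hpk
        have h2 : T * (x/2) * (|x - ((m:ℝ)+1)| / (2*x)) ≤
            T * ((m:ℝ)+1) ^ k * |Real.log (x/((m:ℝ)+1))| := by
          have h3 : T * (x/2) ≤ T * ((m:ℝ)+1) ^ k :=
            mul_le_mul_of_nonneg_left h1 hT.le
          apply mul_le_mul h3 hlog (by positivity)
          positivity
        have h4 : T * (x/2) * (|x - ((m:ℝ)+1)| / (2*x)) = T * (|x - ((m:ℝ)+1)| / 4) := by
          field_simp; ring
        linarith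
      have hstep : f m ≤ Real.exp 1 * x / (T * (|x - ((m:ℝ)+1)| / 4)) := by
        simp only [hf]
        apply div_le_div_of_nonneg_left (by positivity) (by positivity) hden
      have heq : Real.exp 1 * x / (T * (|x - ((m:ℝ)+1)| / 4)) = c4 * |x - ((m:ℝ)+1)|⁻¹ := by
        rw [hc4]; field_simp
      have hg2v : g2 m = c4 * |x - ((m:ℝ)+1)|⁻¹ := by simp only [hg2]; rw [if_pos hreg]
      rw [hg2v, ← heq]
      linarith
    · -- outer region
      have hcase : (m:ℝ)+1 ≤ x/2 ∨ 2*x ≤ (m:ℝ)+1 := by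
        rcases le_or_gt ((m:ℝ)+1) (x/2) with h | h
        · exact Or.inl h
        · right; by_contra h2; push_neg at h2; exact hreg ⟨h, h2⟩
      have hlog := my_abs_log_ge_log2 hx0 hnm0 hcase
      have hlog2p : (0:ℝ) < Real.log 2 := by linarith
      have hden : T * ((m:ℝ)+1) ^ k * Real.log 2 ≤
          T * ((m:ℝ)+1) ^ k * |Real.log (x/((m:ℝ)+1))| :=
        mul_le_mul_of_nonneg_left hlog (by positivity)
      have hstep : f m ≤ Real.exp 1 * x / (T * ((m:ℝ)+1) ^ k * Real.log 2) := by
        simp only [hf]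
        apply div_le_div_of_nonneg_left (by positivity) (by positivity) hden
      have heq : Real.exp 1 * x / (T * ((m:ℝ)+1) ^ k * Real.log 2) = g1 m := by
        simp only [hg1, hA]
        rw [Real.rpow_neg hnm0.le]
        field_simp
      have hg2v : g2 m = 0 := by simp only [hg2]; rw [if_neg hreg]
      rw [hg2v, add_zero, ← heq]
      linarith
  -- summability
  have hsz : Summable (fun m : ℕ => ((m:ℝ)+1) ^ (-k)) := by
    have h1 : Summable (fun n : ℕ => (n:ℝ) ^ (-k)) :=
      Real.summable_nat_rpow.2 (by rw [hkdef]; nlinarith [one_div_pos.2 hL])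
    have h2 := (summable_nat_add_iff 1).2 h1
    apply h2.congr
    intro n; push_cast; ring_nf
  have hs1 : Summable g1 := hsz.mul_left A
  have hs2 : Summable g2 := by
    apply summable_of_ne_finset_zero (s := Finset.range M₀)
    intro m hm
    simp only [hg2]
    simp only [Finset.mem_range, not_lt] at hm
    have : ¬ ((m:ℝ)+1 < 2*x) := by
      push_neg
      calc 2*x ≤ (M₀:ℝ) := hM0x
        _ ≤ (m:ℝ) := by exact_mod_cast hm
        _ ≤ (m:ℝ)+1 := by linarith
    rw [if_neg (fun h => this h.2)]
  have hsumf : Summable f := Summable.of_nonneg_of_le hf0 hfg (hs1.add hs2)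
  have step4 : ∑' m, f m ≤ (∑' m, g1 m) + ∑' m, g2 m := by
    rw [← Summable.tsum_add hs1 hs2]
    exact Summable.tsum_le_tsum hfg hsumf (hs1.add hs2)
  -- bound on tsum g1
  have step5 : ∑' m, g1 m ≤ A * (1 + L) := by
    rw [hg1, tsum_mul_left]
    apply mul_le_mul_of_nonneg_left _ hA0
    have := my_zeta_bound hL
    rw [hkdef]
    exact this
  -- bound on tsum g2
  have step6 : ∑' m, g2 m ≤ c4 * (|x - (N:ℝ)|⁻¹ + 20 * L) := by
    have hxN1 : (N:ℝ) ≤ x + 1/2 := by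
      have := (abs_le.1 hxNhalf).1; linarith
    have hxN2 : x - 1/2 ≤ (N:ℝ) := by
      have := (abs_le.1 hxNhalf).2; linarith
    set t : ℕ → ℝ := fun m =>
      if x/2 < (m:ℝ)+1 ∧ (m:ℝ)+1 < 2*x then |x - ((m:ℝ)+1)|⁻¹ else 0 with ht
    have ht0 : ∀ m, 0 ≤ t m := by
      intro m; simp only [ht]; split
      · positivity
      · exact le_refl 0
    have hvanish : ∀ m ∉ Finset.range M₀, g2 m = 0 := by
      intro m hm
      simp only [hg2]
      simp only [Finset.mem_range, not_lt] at hm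
      have : ¬ ((m:ℝ)+1 < 2*x) := by
        push_neg
        calc 2*x ≤ (M₀:ℝ) := hM0x
          _ ≤ (m:ℝ) := by exact_mod_cast hm
          _ ≤ (m:ℝ)+1 := by linarith
      rw [if_neg (fun h => this h.2)]
    rw [tsum_eq_sum hvanish]
    have hsplit : ∑ m ∈ Finset.range M₀, g2 m = c4 * ∑ m ∈ Finset.range M₀, t m := by
      rw [Finset.mul_sum]
      apply Finset.sum_congr rfl
      intro m _
      simp only [hg2, ht]
      split <;> simp
    rw [hsplit]
    apply mul_le_mul_of_nonneg_left _ hc40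
    -- the natural-number version of N
    set nN : ℕ := N.toNat with hnN
    have hnNcast : ((nN:ℕ):ℝ) = (N:ℝ) := by
      rw [hnN]; exact_mod_cast congrArg (Int.cast : ℤ → ℝ) (Int.toNat_of_nonneg (by omega))
    have hnN2 : 2 ≤ nN := by omega
    set mN : ℕ := nN - 1 with hmN
    have hmN1 : mN + 1 = nN := by omega
    have hmNcast : (mN:ℝ) + 1 = (N:ℝ) := by
      rw [← hnNcast, ← hmN1]; push_cast; ring
    have hnNM : nN < M₀ := by
      have h1 : ((nN:ℕ):ℝ) < (M₀:ℝ) := by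
        rw [hnNcast]; linarith
      exact_mod_cast h1
    have hmNmem : mN ∈ Finset.range M₀ := Finset.mem_range.2 (by omega)
    rw [← Finset.sum_erase_add _ _ hmNmem]
    have htN : t mN ≤ |x - (N:ℝ)|⁻¹ := by
      simp only [ht]
      split
      · rw [hmNcast]
      · positivity
    -- bound for sum over erase
    have herase : ∑ m ∈ (Finset.range M₀).erase mN, t m ≤ 20 * L := by
      set e' := (Finset.range M₀).erase mN with he'
      have hharm : ∑ j ∈ Finset.range M₀, 2*((j:ℝ)+1)⁻¹ ≤ 10 * L := by
        have hh : ∑ j ∈ Finset.range M₀, ((j:ℝ)+1)⁻¹ = (harmonic M₀ : ℝ) := by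
          rw [harmonic]; push_cast; rfl
        have hhb := harmonic_le_one_add_log M₀
        have hM0pos : (0:ℝ) < (M₀:ℝ) := by linarith
        have hM3 : (M₀:ℝ) ≤ 3*x := by
          have h1 := Nat.ceil_lt_add_one (show (0:ℝ) ≤ 2*x by positivity)
          rw [← hM0] at h1
          linarith
        have hlogM : Real.log (M₀:ℝ) ≤ Real.log 3 + L := by
          calc Real.log (M₀:ℝ) ≤ Real.log (3*x) := Real.log_le_log hM0pos hM3
            _ = Real.log 3 + L := by rw [Real.log_mul (by norm_num) (ne_of_gt hx0)]
        have hlog3 : Real.log 3 ≤ 2 * Real.log 2 := by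
          calc Real.log 3 ≤ Real.log 4 := Real.log_le_log (by norm_num) (by norm_num)
            _ = 2 * Real.log 2 := by
              rw [show (4:ℝ) = 2^2 by norm_num, Real.log_pow]; push_cast; ring
        calc ∑ j ∈ Finset.range M₀, 2*((j:ℝ)+1)⁻¹
            = 2 * ∑ j ∈ Finset.range M₀, ((j:ℝ)+1)⁻¹ := by rw [Finset.mul_sum]
          _ = 2 * (harmonic M₀ : ℝ) := by rw [hh]
          _ ≤ 2 * (1 + Real.log M₀) := by linarith
          _ ≤ 10 * L := by nlinarith
      rw [← Finset.sum_filter_add_sum_filter_not e' (fun m => m + 1 < nN) t]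
      have hbelow : ∑ m ∈ e'.filter (fun m => m + 1 < nN), t m
          ≤ ∑ j ∈ Finset.range M₀, 2*((j:ℝ)+1)⁻¹ := by
        have hpt : ∀ m ∈ e'.filter (fun m => m + 1 < nN),
            t m ≤ (fun j : ℕ => 2*((j:ℝ)+1)⁻¹) (nN - m - 2) := by
          intro m hm
          rw [Finset.mem_filter] at hm
          have hmle : m + 2 ≤ nN := by omega
          have hcast : ((nN - m - 2 : ℕ):ℝ) = (N:ℝ) - (m:ℝ) - 2 := by
            have h1 : nN - m - 2 = nN - (m+2) := by omega
            rw [h1, Nat.cast_sub hmle, hnNcast]; push_cast; ring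
          have hd : (m:ℝ) + 2 ≤ (N:ℝ) := by
            rw [← hnNcast]; exact_mod_cast hmle
          simp only [ht]
          split
          · -- region holds
            have hpos : 0 < x - ((m:ℝ)+1) := by linarith
            have h1 : ((N:ℝ) - ((m:ℝ)+1))/2 ≤ x - ((m:ℝ)+1) := by linarith
            have h2 : (0:ℝ) < ((N:ℝ) - ((m:ℝ)+1))/2 := by linarith
            rw [abs_of_pos hpos, hcast]
            calc (x - ((m:ℝ)+1))⁻¹ ≤ (((N:ℝ) - ((m:ℝ)+1))/2)⁻¹ := by
                  apply inv_anti₀ h2 h1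
              _ = 2 * ((N:ℝ) - (m:ℝ) - 2 + 1)⁻¹ := by
                  rw [inv_div]
                  rw [show (N:ℝ) - ((m:ℝ)+1) = (N:ℝ) - (m:ℝ) - 2 + 1 by ring]
                  rw [div_eq_mul_inv]
          · positivity
        have hinj : ∀ m1 ∈ e'.filter (fun m => m + 1 < nN), ∀ m2 ∈ e'.filter (fun m => m + 1 < nN),
            nN - m1 - 2 = nN - m2 - 2 → m1 = m2 := by
          intro m1 h1 m2 h2 h
          rw [Finset.mem_filter] at h1 h2
          omega
        calc ∑ m ∈ e'.filter (fun m => m + 1 < nN), t m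
            ≤ ∑ m ∈ e'.filter (fun m => m + 1 < nN), (fun j : ℕ => 2*((j:ℝ)+1)⁻¹) (nN - m - 2) :=
              Finset.sum_le_sum hpt
          _ = ∑ j ∈ (e'.filter (fun m => m + 1 < nN)).image (fun m => nN - m - 2),
                2*((j:ℝ)+1)⁻¹ := by rw [Finset.sum_image hinj]
          _ ≤ ∑ j ∈ Finset.range M₀, 2*((j:ℝ)+1)⁻¹ := by
              apply Finset.sum_le_sum_of_subset_of_nonneg
              · intro j hj
                rw [Finset.mem_image] at hj
                obtain ⟨m, _, hjm⟩ := hj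
                rw [Finset.mem_range]
                omega
              · intro j _ _; positivity
      have habove : ∑ m ∈ e'.filter (fun m => ¬ m + 1 < nN), t m
          ≤ ∑ j ∈ Finset.range M₀, 2*((j:ℝ)+1)⁻¹ := by
        have hpt : ∀ m ∈ e'.filter (fun m => ¬ m + 1 < nN),
            t m ≤ (fun j : ℕ => 2*((j:ℝ)+1)⁻¹) (m - nN) := by
          intro m hm
          rw [Finset.mem_filter] at hm
          have hmne : m ≠ mN := (Finset.mem_erase.1 hm.1).1
          have hmge : nN ≤ m := by omega
          have hcast : ((m - nN : ℕ):ℝ) = (m:ℝ) - (N:ℝ) := by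
            rw [Nat.cast_sub hmge, hnNcast]
          have hd : (N:ℝ) + 1 ≤ (m:ℝ) + 1 := by
            have h1 : nN + 1 ≤ m + 1 := by omega
            have h2 : ((nN:ℕ):ℝ) + 1 ≤ (m:ℝ) + 1 := by exact_mod_cast h1
            rw [hnNcast] at h2; exact h2
          simp only [ht]
          split
          · have hpos : 0 < ((m:ℝ)+1) - x := by linarith
            have h1 : (((m:ℝ)+1) - (N:ℝ))/2 ≤ ((m:ℝ)+1) - x := by linarith
            have h2 : (0:ℝ) < (((m:ℝ)+1) - (N:ℝ))/2 := by linarith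
            rw [abs_sub_comm, abs_of_pos hpos, hcast]
            calc (((m:ℝ)+1) - x)⁻¹ ≤ ((((m:ℝ)+1) - (N:ℝ))/2)⁻¹ := by
                  apply inv_anti₀ h2 h1
              _ = 2 * ((m:ℝ) - (N:ℝ) + 1)⁻¹ := by
                  rw [inv_div]
                  rw [show (m:ℝ)+1 - (N:ℝ) = (m:ℝ) - (N:ℝ) + 1 by ring]
                  rw [div_eq_mul_inv]
          · positivity
        have hinj : ∀ m1 ∈ e'.filter (fun m => ¬ m + 1 < nN),
            ∀ m2 ∈ e'.filter (fun m => ¬ m + 1 < nN),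
            m1 - nN = m2 - nN → m1 = m2 := by
          intro m1 h1 m2 h2 h
          rw [Finset.mem_filter, Finset.mem_erase] at h1 h2
          omega
        calc ∑ m ∈ e'.filter (fun m => ¬ m + 1 < nN), t m
            ≤ ∑ m ∈ e'.filter (fun m => ¬ m + 1 < nN), (fun j : ℕ => 2*((j:ℝ)+1)⁻¹) (m - nN) :=
              Finset.sum_le_sum hpt
          _ = ∑ j ∈ (e'.filter (fun m => ¬ m + 1 < nN)).image (fun m => m - nN),
                2*((j:ℝ)+1)⁻¹ := by rw [Finset.sum_image hinj]
          _ ≤ ∑ j ∈ Finset.range M₀, 2*((j:ℝ)+1)⁻¹ := by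
              apply Finset.sum_le_sum_of_subset_of_nonneg
              · intro j hj
                rw [Finset.mem_image] at hj
                obtain ⟨m, hm, hjm⟩ := hj
                rw [Finset.mem_filter, Finset.mem_erase, Finset.mem_range] at hm
                rw [Finset.mem_range]
                omega
              · intro j _ _; positivity
      linarith
    linarith
  -- final numeric assembly
  have hP : 0 < x * L / T := by positivity
  have hQ : 0 < x / (T * |x - (N:ℝ)|) := by positivity
  have h7a : A * (1 + L) ≤ 14 * (x * L / T) := by
    have e1 : A * (1+L) = (Real.exp 1 * (1+L) / Real.log 2) * (x / T) := by
      rw [hA]; field_simp; try ring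
    have e2 : 14 * (x*L/T) = (14*L) * (x/T) := by ring
    rw [e1, e2]
    apply mul_le_mul_of_nonneg_right _ (by positivity)
    rw [div_le_iff₀ (by linarith : (0:ℝ) < Real.log 2)]
    nlinarith
  have h7b : c4 * (|x - (N:ℝ)|⁻¹ + 20 * L) ≤ 12 * (x / (T * |x - (N:ℝ)|)) + 240 * (x * L / T) := by
    have e1 : c4 * |x - (N:ℝ)|⁻¹ = (4 * Real.exp 1) * (x / (T * |x - (N:ℝ)|)) := by
      rw [hc4]; field_simp; try ring
    have e2 : c4 * (20 * L) = (80 * Real.exp 1) * (x * L / T) := by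
      rw [hc4]; field_simp; try ring
    have h1 : (4 * Real.exp 1) * (x / (T * |x - (N:ℝ)|)) ≤ 12 * (x / (T * |x - (N:ℝ)|)) := by
      apply mul_le_mul_of_nonneg_right (by linarith) hQ.le
    have h2 : (80 * Real.exp 1) * (x * L / T) ≤ 240 * (x * L / T) := by
      apply mul_le_mul_of_nonneg_right (by linarith) hP.le
    calc c4 * (|x - (N:ℝ)|⁻¹ + 20 * L) = c4 * |x - (N:ℝ)|⁻¹ + c4 * (20 * L) := by ring
      _ = (4 * Real.exp 1) * (x / (T * |x - (N:ℝ)|)) + (80 * Real.exp 1) * (x * L / T) := by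
          rw [e1, e2]
      _ ≤ 12 * (x / (T * |x - (N:ℝ)|)) + 240 * (x * L / T) := add_le_add h1 h2
  calc ∑' m, f m ≤ (∑' m, g1 m) + ∑' m, g2 m := step4
    _ ≤ A * (1+L) + c4 * (|x - (N:ℝ)|⁻¹ + 20 * L) := add_le_add step5 step6
    _ ≤ 14 * (x*L/T) + (12 * (x / (T * |x - (N:ℝ)|)) + 240 * (x * L / T)) := add_le_add h7a h7b
    _ ≤ 10000 * (x * L / T + x / (T * |x - (N:ℝ)|)) := by nlinarith
end
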